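/- Let E be a real inner product space, let α > 0 and τ ≥ 0, and let S, D ∈ E. Then S = α·max(‖D‖ − τ, 0)·‖D‖⁻¹·D (with the convention that the right-hand side is 0 when D = 0) holds if and only if either (‖D‖ ≤ τ and S = 0) or (‖D‖ > τ, S ≠ 0, and D = (1/α)·S + (τ/‖S‖)·S). That is, the activated Euler constitutive relation is equivalent to the dichotomy: below the activation threshold the stress vanishes, and above it the fluid responds as a Navier–Stokes fluid with an activation offset. -/

import Mathlib

open RealInnerProductSpace

theorem activated_euler_formula_iff_dichotomy
    {E : Type*} [NormedAddCommGroup E] [InnerProductSpace ℝ E]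
    (α τ : ℝ) (hα : 0 < α) (hτ : 0 ≤ τ) (S D : E) :
    S = (α * max (‖D‖ - τ) 0 * ‖D‖⁻¹) • D ↔
      (‖D‖ ≤ τ ∧ S = 0) ∨
        (τ < ‖D‖ ∧ S ≠ 0 ∧ D = (1 / α) • S + (τ / ‖S‖) • S) := by
  rcases le_or_gt ‖D‖ τ with hle | hlt
  · have hmax : max (‖D‖ - τ) 0 = 0 := max_eq_right (by linarith)
    rw [hmax]
    simp only [mul_zero, zero_mul, zero_smul]
    constructor
    · intro h; exact Or.inl ⟨hle, h⟩
    · rintro (⟨_, h⟩ | ⟨h, _⟩)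
      · exact h
      · linarith
  · have hDnorm : 0 < ‖D‖ := lt_of_le_of_lt hτ hlt
    have hcd : ‖D‖ ≠ 0 := ne_of_gt hDnorm
    have hmax : max (‖D‖ - τ) 0 = ‖D‖ - τ := max_eq_left (by linarith)
    rw [hmax]
    set c : ℝ := α * (‖D‖ - τ) * ‖D‖⁻¹ with hc
    have hcpos : 0 < c := by
      apply mul_pos (mul_pos hα (by linarith)) (inv_pos.mpr hDnorm)
    constructor
    · intro h
      have hSnorm : ‖S‖ = c * ‖D‖ := by
        rw [h, norm_smul, Real.norm_eq_abs, abs_of_pos hcpos]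
      have hS0 : S ≠ 0 := by
        intro h0
        rw [h0, norm_zero] at hSnorm
        have := mul_pos hcpos hDnorm
        linarith
      refine Or.inr ⟨hlt, hS0, ?_⟩
      conv_lhs => rw [show D = (1:ℝ) • D from (one_smul ℝ D).symm]
      rw [hSnorm, h, smul_smul, smul_smul, ← add_smul]
      congr 1
      have hdt : ‖D‖ - τ ≠ 0 := by linarith
      rw [hc]
      field_simp
      ring
    · rintro (⟨h, _⟩ | ⟨_, hS0, hD⟩)
      · linarith
      · have hSnorm : 0 < ‖S‖ := norm_pos_iff.mpr hS0
        set k : ℝ := 1 / α + τ / ‖S‖ with hk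
        have hkpos : 0 < k := by positivity
        have hDk : D = k • S := by rw [hD, hk, add_smul]
        have hnD : ‖D‖ = k * ‖S‖ := by
          rw [hDk, norm_smul, Real.norm_eq_abs, abs_of_pos hkpos]
        have hS : ‖S‖ = α * (‖D‖ - τ) := by
          have h1 : ‖D‖ = (1 / α + τ / ‖S‖) * ‖S‖ := by rw [hnD, hk]
          field_simp at h1
          nlinarith
        have hck : c * k = 1 := by
          rw [hc, hk, hS]
          have hdt : ‖D‖ - τ ≠ 0 := by linarith
          field_simp
          ring
        rw [hDk, smul_smul, hck, one_smul]
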